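/- arXiv:1307.2171 — 3 statements merged into one kernel-verified Lean document; each statement's English description precedes it below -/
import Mathlib

section
/- Let V be a finite-dimensional real vector space and q, q' quadratic forms on V. If there exists a linear automorphism f of V with q'(v) = q(f v) for all v ∈ V, then there exists a linear automorphism g of V with determinant det(g) > 0 such that q'(v) = q(g v) for all v ∈ V. (Equivalently: the orbits of the full general linear group GL(V) acting on quadratic forms by precomposition coincide with the orbits of its identity component, which consists of the automorphisms of positive determinant.) -/
open Module

lemma aux_neg_coord_invariant {V : Type*} [AddCommGroup V] [Module ℝ V]
    [FiniteDimensional ℝ V] (q' : QuadraticForm ℝ V)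
    (b : Basis (Fin (finrank ℝ V)) ℝ V)
    (hb : (QuadraticMap.associated (R := ℝ) q').IsOrthoᵢ b)
    (e : Fin (finrank ℝ V) → ℝ) (he : ∀ i, e i = 1 ∨ e i = -1) (v : V) :
    q' (∑ i, (e i * b.repr v i) • b i) = q' v := by
  have key := QuadraticMap.basisRepr_eq_of_iIsOrtho q' b hb
  have h1 : q' (∑ i, (e i * b.repr v i) • b i)
      = q'.basisRepr b (fun i => e i * b.repr v i) := by
    rw [QuadraticMap.basisRepr_apply]
  have h2 : q' v = q'.basisRepr b (fun i => b.repr v i) := by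
    rw [QuadraticMap.basisRepr_apply]
    congr 1
    exact (b.sum_repr v).symm
  rw [h1, h2, key, QuadraticMap.weightedSumSquares_apply,
    QuadraticMap.weightedSumSquares_apply]
  refine Finset.sum_congr rfl fun i _ => ?_
  rcases he i with h | h <;> rw [h] <;> ring_nf

/-- The `GL(V)`-orbits on quadratic forms coincide with the orbits of the identity
component `GL₀(V)`: if two quadratic forms are related by a linear automorphism,
then they are related by a linear automorphism of positive determinant. -/
theorem orbit_eq_identity_component_orbit
    (V : Type*) [AddCommGroup V] [Module ℝ V] [FiniteDimensional ℝ V]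
    (q q' : QuadraticForm ℝ V)
    (h : ∃ f : V ≃ₗ[ℝ] V, ∀ v, q' v = q (f v)) :
    ∃ g : V ≃ₗ[ℝ] V, 0 < LinearMap.det (g : V →ₗ[ℝ] V) ∧ ∀ v, q' v = q (g v) := by
  obtain ⟨f, hf⟩ := h
  have hdet : LinearMap.det (f : V →ₗ[ℝ] V) ≠ 0 := f.isUnit_det'.ne_zero
  rcases hdet.lt_or_gt with hneg | hpos
  swap
  · exact ⟨f, hpos, hf⟩
  -- det f < 0 : compose with a reflection preserving q'
  by_cases hn : finrank ℝ V = 0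
  · -- V is trivial, so det f = 1, contradiction with hneg
    have : Subsingleton V := by
      rw [← Module.finrank_zero_iff (R := ℝ)]; exact hn
    have : (f : V →ₗ[ℝ] V) = LinearMap.id := by
      ext v; exact Subsingleton.elim _ _
    rw [this, LinearMap.det_id] at hneg
    norm_num at hneg
  obtain ⟨b, hb⟩ := LinearMap.BilinForm.exists_orthogonal_basis
    (QuadraticForm.associated_isSymm ℝ q')
  have hnpos : 0 < finrank ℝ V := Nat.pos_of_ne_zero hn
  set i0 : Fin (finrank ℝ V) := ⟨0, hnpos⟩
  set e : Fin (finrank ℝ V) → ℝ := fun i => if i = i0 then -1 else 1 with he_def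
  have he : ∀ i, e i = 1 ∨ e i = -1 := fun i => by
    by_cases hi : i = i0 <;> simp [he_def, hi]
  have he2 : ∀ i, e i * e i = 1 := fun i => by
    rcases he i with h | h <;> rw [h] <;> norm_num
  -- the linear map negating the i0-th coordinate
  set t : V →ₗ[ℝ] V := b.constr ℝ (fun i => e i • b i) with ht_def
  have htb : ∀ j, t (b j) = e j • b j := fun j => by
    simp [ht_def, Basis.constr_basis]
  have htt : t.comp t = LinearMap.id := b.ext fun j => by
    simp [htb, smul_smul, he2 j]
  set s : V ≃ₗ[ℝ] V := LinearEquiv.ofLinear t t htt htt with hs_def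
  have hsmat : LinearMap.toMatrix b b t = Matrix.diagonal e := by
    ext i j
    rw [LinearMap.toMatrix_apply, htb, map_smul]
    by_cases hij : i = j
    · subst hij; simp [Matrix.diagonal]
    · simp [Matrix.diagonal, hij, Ne.symm hij, Basis.repr_self,
        Finsupp.single_apply]
  have hdets : LinearMap.det t = -1 := by
    rw [← LinearMap.det_toMatrix b, hsmat, Matrix.det_diagonal]
    rw [show (∏ i, e i) = ∏ i, (if i = i0 then (-1 : ℝ) else 1) from rfl]
    rw [Finset.prod_ite_eq' Finset.univ i0 (fun _ => (-1 : ℝ))]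
    simp
  refine ⟨s.trans f, ?_, ?_⟩
  · have : ((s.trans f : V ≃ₗ[ℝ] V) : V →ₗ[ℝ] V)
        = (f : V →ₗ[ℝ] V).comp t := rfl
    rw [this, LinearMap.det_comp, hdets]
    nlinarith
  · intro v
    have hsv : s v = ∑ i, (e i * b.repr v i) • b i := by
      show t v = _
      conv_lhs => rw [← b.sum_repr v, map_sum]
      refine Finset.sum_congr rfl fun j _ => ?_
      rw [map_smul, htb, smul_smul, mul_comm]
    have : q' (s v) = q' v := by
      rw [hsv]
      exact aux_neg_coord_invariant q' b hb e he v
    calc q' v = q' (s v) := this.symm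
      _ = q (f (s v)) := hf (s v)
      _ = q ((s.trans f) v) := rfl
end

section
/- Let X be a connected topological space and let E be a topological real vector bundle over X whose model fiber F is a finite-dimensional real normed space. Let q be a continuous real-valued function on the total space of E such that for each x ∈ X the restriction q_x of q to the fiber E_x is a quadratic form whose polar form is nondegenerate. Then the function assigning to each x ∈ X the positive index n₊(q_x) (the maximal dimension of a subspace of E_x on which q_x is positive definite) is constant on X; equivalently, the inertia (n₊(q_x), n₋(q_x)) does not depend on x. -/
/-- The positive index of inertia of a quadratic form: the maximal dimension of a
subspace on which the form is positive definite. -/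
noncomputable def posIndex {V : Type*} [AddCommGroup V] [Module ℝ V]
    (q : QuadraticForm ℝ V) : ℕ :=
  sSup {d : ℕ | ∃ W : Submodule ℝ V, Module.finrank ℝ W = d ∧ ∀ v ∈ W, v ≠ 0 → 0 < q v}

/-- The negative index of inertia of a quadratic form: the maximal dimension of a
subspace on which the form is negative definite. -/
noncomputable def negIndex {V : Type*} [AddCommGroup V] [Module ℝ V]
    (q : QuadraticForm ℝ V) : ℕ :=
  sSup {d : ℕ | ∃ W : Submodule ℝ V, Module.finrank ℝ W = d ∧ ∀ v ∈ W, v ≠ 0 → q v < 0}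

open Module

section AlgAux

variable {V : Type*} [AddCommGroup V] [Module ℝ V]

/-- The set of dimensions of positive definite subspaces. -/
def posSet (q : QuadraticForm ℝ V) : Set ℕ :=
  {d : ℕ | ∃ W : Submodule ℝ V, Module.finrank ℝ W = d ∧ ∀ v ∈ W, v ≠ 0 → 0 < q v}

lemma posIndex_eq_sSup (q : QuadraticForm ℝ V) : posIndex q = sSup (posSet q) := rfl

lemma zero_mem_posSet (q : QuadraticForm ℝ V) : 0 ∈ posSet q :=
  ⟨⊥, finrank_bot ℝ V, fun v hv hv0 => absurd ((Submodule.mem_bot ℝ).mp hv) hv0⟩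

lemma posSet_bddAbove [FiniteDimensional ℝ V] (q : QuadraticForm ℝ V) :
    BddAbove (posSet q) := by
  refine ⟨finrank ℝ V, ?_⟩
  rintro d ⟨W, hW, -⟩
  exact hW ▸ W.finrank_le

lemma le_posIndex [FiniteDimensional ℝ V] {q : QuadraticForm ℝ V} {d : ℕ}
    (h : d ∈ posSet q) : d ≤ posIndex q :=
  le_csSup (posSet_bddAbove q) h

lemma posIndex_mem [FiniteDimensional ℝ V] (q : QuadraticForm ℝ V) :
    posIndex q ∈ posSet q :=
  Nat.sSup_mem ⟨0, zero_mem_posSet q⟩ (posSet_bddAbove q)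

lemma negIndex_eq_posIndex_neg (q : QuadraticForm ℝ V) :
    negIndex q = posIndex (-q) := by
  unfold negIndex posIndex
  congr 1
  ext d
  constructor <;> rintro ⟨W, h1, h2⟩ <;> refine ⟨W, h1, fun v hv h0 => ?_⟩
  · simpa [QuadraticMap.neg_apply, neg_pos] using h2 v hv h0
  · have := h2 v hv h0
    rw [QuadraticMap.neg_apply, neg_pos] at this
    exact this

lemma polar_neg_q (q : QuadraticForm ℝ V) (x y : V) :
    QuadraticMap.polar (⇑(-q)) x y = -QuadraticMap.polar (⇑q) x y := by
  simp only [QuadraticMap.polar, QuadraticMap.neg_apply]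
  ring

/-- value of a quadratic form on a combination of pairwise polar-orthogonal vectors -/
lemma quadratic_sum {ι : Type*} [DecidableEq ι] (q : QuadraticForm ℝ V) (v : ι → V)
    (horth : ∀ i j, i ≠ j → QuadraticMap.polar (⇑q) (v i) (v j) = 0)
    (s : Finset ι) (a : ι → ℝ) :
    q (∑ i ∈ s, a i • v i) = ∑ i ∈ s, a i ^ 2 * q (v i) := by
  induction s using Finset.induction with
  | empty => simp
  | @insert x s hx ih =>
    rw [Finset.sum_insert hx, Finset.sum_insert hx, ← ih]
    have hp : QuadraticMap.polar (⇑q) (a x • v x) (∑ i ∈ s, a i • v i) = 0 := by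
      have : (q.polarBilin (a x • v x)) (∑ i ∈ s, a i • v i) = 0 := by
        rw [map_sum]
        refine Finset.sum_eq_zero fun i hi => ?_
        have hne : x ≠ i := fun h => hx (h ▸ hi)
        rw [QuadraticMap.polarBilin_apply_apply, QuadraticMap.polar_smul_left,
          QuadraticMap.polar_smul_right, horth x i hne]
        simp
      rw [← QuadraticMap.polarBilin_apply_apply]
      exact this
    have hq : q (a x • v x + ∑ i ∈ s, a i • v i)
        = q (a x • v x) + q (∑ i ∈ s, a i • v i)
          + QuadraticMap.polar (⇑q) (a x • v x) (∑ i ∈ s, a i • v i) := by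
      simp only [QuadraticMap.polar]
      ring
    rw [hq, hp, add_zero, QuadraticMap.map_smul, smul_eq_mul]
    ring_nf

lemma span_filter_pos_mem {ι : Type*} [Fintype ι] [DecidableEq ι]
    [FiniteDimensional ℝ V]
    (q : QuadraticForm ℝ V) (v : Basis ι ℝ V)
    (horth : ∀ i j, i ≠ j → QuadraticMap.polar (⇑q) (v i) (v j) = 0) :
    (Finset.univ.filter fun i => 0 < q (v i)).card ∈ posSet q := by
  classical
  set s : Finset ι := Finset.univ.filter fun i => 0 < q (v i) with hs
  have hli : LinearIndependent ℝ (fun i : s => v i) :=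
    v.linearIndependent.comp _ Subtype.val_injective
  refine ⟨Submodule.span ℝ (Set.range fun i : s => v i), ?_, ?_⟩
  · rw [finrank_span_eq_card hli, Fintype.card_coe]
  · intro x hxmem hx0
    rw [Submodule.mem_span_range_iff_exists_fun] at hxmem
    obtain ⟨a, ha⟩ := hxmem
    set b : ι → ℝ := fun i => if h : i ∈ s then a ⟨i, h⟩ else 0 with hb
    have hxb : x = ∑ i ∈ s, b i • v i := by
      rw [← ha, ← Finset.sum_coe_sort s fun i => b i • v i]
      refine Finset.sum_congr rfl fun i _ => ?_
      simp [hb, i.2]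
    have hqx : q x = ∑ i ∈ s, b i ^ 2 * q (v i) := by
      rw [hxb, quadratic_sum q v horth]
    rw [hqx]
    refine Finset.sum_pos' (fun i hi => ?_) ?_
    · have : 0 < q (v i) := (Finset.mem_filter.mp hi).2
      positivity
    · by_contra h
      push_neg at h
      have hb0 : ∀ i ∈ s, b i = 0 := by
        intro i hi
        have hqv : 0 < q (v i) := (Finset.mem_filter.mp hi).2
        by_contra hbne
        have h1 : 0 < b i ^ 2 := by positivity
        have h2 : 0 < b i ^ 2 * q (v i) := mul_pos h1 hqv
        linarith [h i hi]
      exact hx0 (hxb.trans (Finset.sum_eq_zero fun i hi => by rw [hb0 i hi, zero_smul]))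

/-- Sylvester's law of inertia for nondegenerate real quadratic forms. -/
lemma posIndex_add_negIndex [FiniteDimensional ℝ V]
    (q : QuadraticForm ℝ V)
    (hnd : ∀ u : V, (∀ w : V, QuadraticMap.polar (⇑q) u w = 0) → u = 0) :
    posIndex q + negIndex q = Module.finrank ℝ V := by
  classical
  refine le_antisymm ?_ ?_
  · obtain ⟨Wp, hWp, hpos⟩ := posIndex_mem q
    obtain ⟨Wn, hWn, hneg⟩ : ∃ W : Submodule ℝ V,
        Module.finrank ℝ W = negIndex q ∧ ∀ v ∈ W, v ≠ 0 → 0 < (-q) v := by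
      have := posIndex_mem (-q)
      rw [← negIndex_eq_posIndex_neg] at this
      exact this
    have hWn' : ∀ u ∈ Wn, u ≠ 0 → q u < 0 := by
      intro u hu h0
      have := hneg u hu h0
      rwa [QuadraticMap.neg_apply, neg_pos] at this
    have hdisj : Wp ⊓ Wn = ⊥ := by
      rw [Submodule.eq_bot_iff]
      intro u hu
      by_contra h0
      exact absurd (hpos u hu.1 h0) (not_lt.mpr (hWn' u hu.2 h0).le)
    have hsum := Submodule.finrank_sup_add_finrank_inf_eq Wp Wn
    rw [hdisj, finrank_bot, add_zero] at hsum
    calc posIndex q + negIndex q = Module.finrank ℝ Wp + Module.finrank ℝ Wn := by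
          rw [hWp, hWn]
      _ = Module.finrank ℝ ((Wp ⊔ Wn : Submodule ℝ V) : Submodule ℝ V) := hsum.symm
      _ ≤ Module.finrank ℝ V := Submodule.finrank_le _
  · have hsymm : (q.polarBilin).IsSymm := by
      rw [LinearMap.isSymm_def]
      intro x y
      simp only [RingHom.id_apply, QuadraticMap.polarBilin_apply_apply]
      exact QuadraticMap.polar_comm (⇑q) x y
    obtain ⟨v, hv⟩ := LinearMap.BilinForm.exists_orthogonal_basis hsymm
    have horth : ∀ i j, i ≠ j → QuadraticMap.polar (⇑q) (v i) (v j) = 0 := by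
      intro i j hij
      have := hv hij
      rw [← QuadraticMap.polarBilin_apply_apply]
      exact this
    have hc : ∀ i, q (v i) ≠ 0 := by
      intro i hc0
      have hzero : ∀ w, QuadraticMap.polar (⇑q) (v i) w = 0 := by
        intro w
        have hzb : q.polarBilin (v i) = 0 := by
          apply v.ext
          intro j
          by_cases hij : i = j
          · subst hij
            have hself := QuadraticMap.polar_self (Q := q) (v i)
            simp only [QuadraticMap.polarBilin_apply_apply, LinearMap.zero_apply]
            rw [hself, hc0]
            simp
          · simpa using horth i j hij
        have := congrArg (fun f => f w) hzb
        simpa using this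
      exact v.ne_zero i (hnd _ hzero)
    have horthneg : ∀ i j, i ≠ j → QuadraticMap.polar (⇑(-q)) (v i) (v j) = 0 := by
      intro i j hij
      rw [polar_neg_q, horth i j hij, neg_zero]
    have hp := le_posIndex (span_filter_pos_mem q v horth)
    have hn := le_posIndex (span_filter_pos_mem (-q) v horthneg)
    rw [← negIndex_eq_posIndex_neg] at hn
    have hcard : (Finset.univ.filter fun i => 0 < q (v i)).card
        + (Finset.univ.filter fun i => 0 < (-q) (v i)).card = Module.finrank ℝ V := by
      have hcompl : (Finset.univ.filter fun i => 0 < (-q) (v i))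
          = Finset.univ.filter fun i => ¬ (0 < q (v i)) := by
        ext i
        simp only [Finset.mem_filter, Finset.mem_univ, true_and, QuadraticMap.neg_apply,
          neg_pos, not_lt]
        exact ⟨fun h => h.le, fun h => lt_of_le_of_ne h (hc i)⟩
      rw [hcompl, Finset.card_filter_add_card_filter_not,
        Finset.card_univ, ← Module.finrank_eq_card_basis v]
    omega

end AlgAux

open Bundle Topology in
lemma eventually_le_posIndex
    {X : Type*} [TopologicalSpace X]
    {F : Type*} [NormedAddCommGroup F] [NormedSpace ℝ F] [FiniteDimensional ℝ F]
    {E : X → Type*} [∀ x, AddCommGroup (E x)] [∀ x, Module ℝ (E x)]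
    [∀ x, TopologicalSpace (E x)] [TopologicalSpace (Bundle.TotalSpace F E)]
    [FiberBundle F E] [VectorBundle ℝ F E]
    (q : Bundle.TotalSpace F E → ℝ) (hq : Continuous q)
    (Q : ∀ x, QuadraticForm ℝ (E x))
    (hQ : ∀ (x : X) (v : E x), q (Bundle.TotalSpace.mk x v) = Q x v)
    (x : X) :
    ∀ᶠ y in 𝓝 x, posIndex (Q x) ≤ posIndex (Q y) := by
  classical
  haveI hfd : ∀ y : X, FiniteDimensional ℝ (E y) := fun y =>
    LinearEquiv.finiteDimensional
      ((trivializationAt F E y).continuousLinearEquivAt ℝ y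
        (FiberBundle.mem_baseSet_trivializationAt' y)).symm.toLinearEquiv
  set e := trivializationAt F E x with he
  have hx : x ∈ e.baseSet := FiberBundle.mem_baseSet_trivializationAt' x
  obtain ⟨W, hWd, hWpos⟩ := posIndex_mem (Q x)
  set A := e.continuousLinearEquivAt ℝ x hx with hA
  set W' : Submodule ℝ F := W.map (A.toLinearEquiv : E x →ₗ[ℝ] F) with hW'
  have hW'd : Module.finrank ℝ W' = posIndex (Q x) := by
    rw [hW', LinearEquiv.finrank_map_eq]
    exact hWd
  set K : Set F := (W' : Set F) ∩ Metric.sphere 0 1 with hK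
  have hKc : IsCompact K := by
    have h1 : IsClosed (W' : Set F) := Submodule.closed_of_finiteDimensional W'
    exact (isCompact_sphere (0 : F) 1).inter_left h1
  set g : X × F → ℝ := fun p => q (Bundle.TotalSpace.mk p.1 (e.symm p.1 p.2)) with hg
  have hgc : ContinuousOn g (e.baseSet ×ˢ Set.univ) := hq.comp_continuousOn e.continuousOn_symm
  set O : Set (X × F) := (e.baseSet ×ˢ Set.univ) ∩ g ⁻¹' Set.Ioi 0 with hO
  have hOopen : IsOpen O :=
    hgc.isOpen_inter_preimage (e.open_baseSet.prod isOpen_univ) isOpen_Ioi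
  have hsub : ({x} : Set X) ×ˢ K ⊆ O := by
    rintro ⟨x', w⟩ ⟨hx', hwK⟩
    obtain rfl : x = x' := (show x' = x from hx').symm
    replace hwK : w ∈ K := hwK
    obtain ⟨hwW', hwn⟩ := hwK
    have hwn' : ‖w‖ = 1 := mem_sphere_zero_iff_norm.mp hwn
    refine ⟨⟨hx, Set.mem_univ _⟩, ?_⟩
    obtain ⟨u, huW, hu⟩ := Submodule.mem_map.mp hwW'
    have hw0 : w ≠ 0 := by
      intro h
      rw [h, norm_zero] at hwn'
      norm_num at hwn'
    have hu0 : u ≠ 0 := by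
      rintro rfl
      apply hw0
      rw [← hu]
      simp
    have hsymm : e.symm x w = u := by
      have h' : A.symm w = u := by
        rw [← hu]
        exact A.symm_apply_apply u
      rw [← h', hA, Trivialization.continuousLinearEquivAt_symm_apply]
    show (0 : ℝ) < q ⟨x, e.symm x w⟩
    rw [hsymm, hQ]
    exact hWpos u huW hu0
  obtain ⟨U₁, U₂, hU₁o, hU₂o, hxU₁, hKU₂, hUsub⟩ :=
    generalized_tube_lemma isCompact_singleton hKc hOopen hsub
  filter_upwards [hU₁o.mem_nhds (hxU₁ rfl), e.open_baseSet.mem_nhds hx] with y hyU₁ hy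
  set B := e.continuousLinearEquivAt ℝ y hy with hB
  refine le_posIndex ⟨W'.map (B.symm.toLinearEquiv : F →ₗ[ℝ] E y), ?_, ?_⟩
  · rw [LinearEquiv.finrank_map_eq, hW'd]
  · intro u huW hu0
    obtain ⟨w, hwW', hw⟩ := Submodule.mem_map.mp huW
    have hw0 : w ≠ 0 := by
      rintro rfl
      apply hu0
      rw [← hw]
      simp
    have hnw : (0 : ℝ) < ‖w‖ := norm_pos_iff.mpr hw0
    set w₀ : F := ‖w‖⁻¹ • w with hw₀
    have hw₀W' : w₀ ∈ W' := W'.smul_mem _ hwW'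
    have hw₀n : ‖w₀‖ = 1 := by
      rw [hw₀, norm_smul, norm_inv, norm_norm, inv_mul_cancel₀ hnw.ne']
    have hmemO : (y, w₀) ∈ O :=
      hUsub ⟨hyU₁, hKU₂ ⟨hw₀W', mem_sphere_zero_iff_norm.mpr hw₀n⟩⟩
    have hg0 : 0 < g (y, w₀) := hmemO.2
    have hBs : e.symm y w₀ = B.symm w₀ := by
      rw [hB, Trivialization.continuousLinearEquivAt_symm_apply]
    have h1 : g (y, w₀) = Q y (B.symm w₀) := by
      show q ⟨y, e.symm y w₀⟩ = Q y (B.symm w₀)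
      rw [hBs, hQ]
    have h2 : u = ‖w‖ • (B.symm w₀ : E y) := by
      have hww : ‖w‖ • w₀ = w := by
        rw [hw₀, smul_smul, mul_inv_cancel₀ hnw.ne', one_smul]
      rw [← hw]
      show B.symm w = ‖w‖ • B.symm w₀
      conv_lhs => rw [← hww]
      exact map_smul B.symm _ _
    have h3 : 0 < Q y (B.symm w₀) := h1 ▸ hg0
    rw [h2, QuadraticMap.map_smul, smul_eq_mul]
    positivity

/-- A continuous fiberwise nondegenerate quadratic form on a vector bundle over a
connected base has constant inertia. -/
theorem inertia_constant_of_connected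
    {X : Type*} [TopologicalSpace X] [ConnectedSpace X]
    {F : Type*} [NormedAddCommGroup F] [NormedSpace ℝ F] [FiniteDimensional ℝ F]
    {E : X → Type*} [∀ x, AddCommGroup (E x)] [∀ x, Module ℝ (E x)]
    [∀ x, TopologicalSpace (E x)] [TopologicalSpace (Bundle.TotalSpace F E)]
    [FiberBundle F E] [VectorBundle ℝ F E]
    (q : Bundle.TotalSpace F E → ℝ) (hq : Continuous q)
    (Q : ∀ x, QuadraticForm ℝ (E x))
    (hQ : ∀ (x : X) (v : E x), q (Bundle.TotalSpace.mk x v) = Q x v)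
    (hnd : ∀ (x : X) (u : E x),
      (∀ v : E x, QuadraticMap.polar (⇑(Q x)) u v = 0) → u = 0) :
    ∀ x y : X, posIndex (Q x) = posIndex (Q y) ∧ negIndex (Q x) = negIndex (Q y) := by
  classical
  haveI hfd : ∀ y : X, FiniteDimensional ℝ (E y) := fun y =>
    LinearEquiv.finiteDimensional
      ((trivializationAt F E y).continuousLinearEquivAt ℝ y
        (FiberBundle.mem_baseSet_trivializationAt' y)).symm.toLinearEquiv
  have hrank : ∀ z : X, posIndex (Q z) + negIndex (Q z) = Module.finrank ℝ F := by
    intro z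
    rw [posIndex_add_negIndex (Q z) (hnd z)]
    exact ((trivializationAt F E z).continuousLinearEquivAt ℝ z
      (FiberBundle.mem_baseSet_trivializationAt' z)).toLinearEquiv.finrank_eq
  have hQ' : ∀ (x : X) (v : E x), (fun p => -(q p)) (Bundle.TotalSpace.mk x v)
      = (-(Q x)) v := by
    intro x v
    simp [hQ, QuadraticMap.neg_apply]
  have hev : ∀ x : X, ∀ᶠ y in nhds x, posIndex (Q y) = posIndex (Q x) := by
    intro x
    have h1 := eventually_le_posIndex q hq Q hQ x
    have h2 := eventually_le_posIndex (fun p => -(q p)) hq.neg (fun z => -(Q z)) hQ' x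
    filter_upwards [h1, h2] with y hy1 hy2
    rw [← negIndex_eq_posIndex_neg, ← negIndex_eq_posIndex_neg] at hy2
    have := hrank x
    have := hrank y
    omega
  have hlc : IsLocallyConstant fun z => posIndex (Q z) := by
    intro s
    rw [isOpen_iff_mem_nhds]
    intro x hx
    filter_upwards [hev x] with y hy
    show posIndex (Q y) ∈ s
    rw [hy]
    exact hx
  have hconst : ∀ x y : X, posIndex (Q x) = posIndex (Q y) := fun x y =>
    hlc.apply_eq_of_preconnectedSpace x y
  intro x y
  refine ⟨hconst x y, ?_⟩
  have h1 := hrank x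
  have h2 := hrank y
  have h3 := hconst x y
  omega
end

section
/- Let p : ℝ → ℝ/2πℤ be the quotient map and, for a natural number k, let ℓ_k : ℝ → ℝP¹ be the map sending α to the point of the real projective line ℝP¹ = ℙ(ℝ²) given by the span of the nonzero vector (cos(kα/2), sin(kα/2)). Let k ≠ k' be natural numbers and suppose F, F' : ℝ/2πℤ → ℝP¹ are continuous maps satisfying F ∘ p = ℓ_k and F' ∘ p = ℓ_{k'}. Then F and F' are not homotopic. -/
open Complex Set

/-- The vector `(cos θ, sin θ)` is nonzero. -/
lemma cos_sin_ne_zero (θ : ℝ) : ((Real.cos θ, Real.sin θ) : ℝ × ℝ) ≠ 0 := by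
  intro h
  have h1 : Real.cos θ = 0 := congrArg Prod.fst h
  have h2 : Real.sin θ = 0 := congrArg Prod.snd h
  have h3 := Real.sin_sq_add_cos_sq θ
  rw [h1, h2] at h3
  norm_num at h3


/-- The quotient topology on the real projective line `ℙ(ℝ²)`, i.e. the quotient
of the subspace `ℝ² \ {0}` of `ℝ²` by the projectivization equivalence. -/
instance : TopologicalSpace (Projectivization ℝ (ℝ × ℝ)) :=
  inferInstanceAs (TopologicalSpace (Quotient (projectivizationSetoid ℝ (ℝ × ℝ))))

/-! ### Auxiliary facts about points on the circle -/

lemma circle_dist_eq (z w : Circle) : dist z w = ‖(z:ℂ) - w‖ := by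
  exact (Subtype.dist_eq z w).trans (Complex.dist_eq _ _)

lemma circle_ne_neg_of_dist_lt {z w : Circle} (h : dist z w < 2) : (z:ℂ) ≠ -(w:ℂ) := by
  intro hzw
  rw [circle_dist_eq, hzw] at h
  have : ‖-(w:ℂ) - w‖ = 2 := by
    have : -(w:ℂ) - w = -(2 * w) := by ring
    rw [this, norm_neg, norm_mul]
    simp [Circle.norm_coe]
  linarith [this ▸ h]

lemma circle_div_mem_slitPlane {z w : Circle} (h : dist z w < 2) :
    ((z:ℂ) / (w:ℂ)) ∈ Complex.slitPlane := by
  by_contra hmem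
  rw [Complex.mem_slitPlane_iff] at hmem
  push_neg at hmem
  obtain ⟨h1, h2⟩ := hmem
  set u : ℂ := (z:ℂ) / (w:ℂ) with hu
  have habs : ‖u‖ = 1 := by
    rw [hu, norm_div]; simp [Circle.norm_coe]
  have him : u.im = 0 := h2
  have hre : u.re ≤ 0 := h1
  have : u = -1 := by
    have : ‖u‖ = |u.re| := by
      rw [Complex.norm_def, Complex.normSq_apply, him]
      simp [Real.sqrt_mul_self_eq_abs]
    rw [habs] at this
    have hre1 : u.re = -1 := by
      rcases abs_eq (by norm_num : (0:ℝ) ≤ 1) |>.mp this.symm with h | h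
      · linarith
      · exact h
    apply Complex.ext <;> simp [hre1, him]
  have : (z:ℂ) = -(w:ℂ) := by
    rw [hu, div_eq_iff (Circle.coe_ne_zero _)] at this
    linear_combination this
  exact circle_ne_neg_of_dist_lt h this

lemma circle_exp_arg_div (z w : Circle) :
    Circle.exp (Complex.arg ((z:ℂ)/(w:ℂ))) * w = z := by
  have := Circle.exp_arg (z / w)
  have h2 : ((z / w : Circle) : ℂ) = (z:ℂ)/(w:ℂ) := by push_cast; ring
  rw [h2] at this
  rw [this, div_mul_cancel]

/-! ### Lifting continuous maps to the circle along `Circle.exp` -/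

lemma lift_step (g : ℝ → Circle) (hg : Continuous g) (a δ : ℝ) (hδpos : 0 < δ)
    (hδ : ∀ s t : ℝ, |s - t| ≤ δ → dist (g s) (g t) < 2) (θ₀ : ℝ)
    (h₀ : Circle.exp θ₀ = g a) :
    ∀ n : ℕ, ∃ θ : ℝ → ℝ, Continuous θ ∧ θ a = θ₀ ∧
      ∀ t, Circle.exp (θ t) = g (max a (min t (a + n * δ))) := by
  intro n
  induction n with
  | zero =>
    refine ⟨fun _ => θ₀, continuous_const, rfl, fun t => ?_⟩
    have : max a (min t (a + (0:ℕ) * δ)) = a := by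
      push_cast; rw [zero_mul, add_zero]
      exact max_eq_left (min_le_right t a)
    rw [this, h₀]
  | succ n ih =>
    obtain ⟨θ, hθc, hθa, hθ⟩ := ih
    set c : ℝ := a + n * δ with hc
    set d : ℝ := a + (n + 1 : ℕ) * δ with hd
    have hac : a ≤ c := by
      rw [hc]; nlinarith [Nat.cast_nonneg (α := ℝ) n]
    have hcd : c ≤ d := by rw [hc, hd]; push_cast; nlinarith
    have hdc : d - c = δ := by rw [hc, hd]; push_cast; ring
    set m : ℝ → ℝ := fun t => max c (min t d) with hm
    have hmc : Continuous m := continuous_const.max (continuous_id.min continuous_const)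
    have hmmem : ∀ t, m t ∈ Icc c d := fun t =>
      ⟨le_max_left _ _, max_le hcd (min_le_right _ _)⟩
    have hclose : ∀ t, dist (g (m t)) (g c) < 2 := by
      intro t
      apply hδ
      rw [abs_sub_le_iff]
      constructor
      · linarith [(hmmem t).2, hdc]
      · linarith [(hmmem t).1, hδpos.le]
    set θ' : ℝ → ℝ := fun t => θ t + Complex.arg ((g (m t) : ℂ) / (g c : ℂ)) with hθ'
    have hθ'c : Continuous θ' := by
      apply hθc.add
      have hgc : Continuous fun t => ((g (m t) : ℂ) / (g c : ℂ)) :=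
        (continuous_subtype_val.comp (hg.comp hmc)).div_const _
      refine continuous_iff_continuousAt.2 fun t => ?_
      show ContinuousAt (Complex.arg ∘ (fun t => ((g (m t) : ℂ) / (g c : ℂ)))) t
      refine ContinuousAt.comp ?_ hgc.continuousAt
      exact Complex.continuousAt_arg (circle_div_mem_slitPlane (hclose t))
    refine ⟨θ', hθ'c, ?_, ?_⟩
    · have hma : m a = c := by
        rw [hm]
        simp only []
        rw [min_eq_left (hac.trans hcd), max_eq_left hac]
      rw [hθ']
      simp only []
      rw [hma, div_self (Circle.coe_ne_zero _), Complex.arg_one, add_zero, hθa]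
    · intro t
      have key : Circle.exp (θ' t) = Circle.exp (θ t) *
          Circle.exp (Complex.arg ((g (m t) : ℂ) / (g c : ℂ))) := Circle.exp_add _ _
      rcases le_total t c with htc | hct
      · have hmt : m t = c := by
          rw [hm]; simp only []
          rw [min_eq_left (htc.trans hcd), max_eq_left htc]
        have hmin : min t d = min t c := by
          rw [min_eq_left (htc.trans hcd), min_eq_left htc]
        rw [key, hmt, div_self (Circle.coe_ne_zero _), Complex.arg_one, Circle.exp_zero,
          mul_one, hθ t, hmin]
      · have hmt : m t = min t d := by
          rw [hm]; exact max_eq_right (le_min hct hcd)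
        have h1 : max a (min t c) = c := by rw [min_eq_right hct, max_eq_right hac]
        have h2 : max a (min t d) = min t d :=
          max_eq_right (le_min (hac.trans hct) (hac.trans hcd))
        have h3 : Circle.exp (θ t) = g c := by rw [hθ t, h1]
        rw [key, h3, hmt, mul_comm, circle_exp_arg_div, h2]

lemma exists_lift (g : ℝ → Circle) (hg : Continuous g) (a b θ₀ : ℝ)
    (h₀ : Circle.exp θ₀ = g a) :
    ∃ θ : ℝ → ℝ, Continuous θ ∧ θ a = θ₀ ∧ ∀ t ∈ Icc a b, Circle.exp (θ t) = g t := by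
  rcases le_or_gt a b with hab | hab
  swap
  · exact ⟨fun _ => θ₀, continuous_const, rfl, fun t ht => absurd (ht.1.trans ht.2) hab.not_ge⟩
  set clamp : ℝ → ℝ := fun t => max a (min t b) with hclamp
  have hclampc : Continuous clamp := continuous_const.max (continuous_id.min continuous_const)
  have hclampmem : ∀ t, clamp t ∈ Icc a b := fun t =>
    ⟨le_max_left _ _, max_le hab (min_le_right _ _)⟩
  have hclamplip : ∀ s t : ℝ, |clamp s - clamp t| ≤ |s - t| := by
    intro s t
    calc |clamp s - clamp t| = |max (min s b) a - max (min t b) a| := by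
          rw [hclamp]; simp only []; rw [max_comm a, max_comm a]
      _ ≤ |min s b - min t b| := abs_max_sub_max_le_abs _ _ _
      _ ≤ max |s - t| |b - b| := abs_min_sub_min_le_max _ _ _ _
      _ = |s - t| := by rw [sub_self, abs_zero]; exact max_eq_left (abs_nonneg _)
  set gb : ℝ → Circle := fun t => g (clamp t) with hgb
  have hgbc : Continuous gb := hg.comp hclampc
  have huc : UniformContinuousOn g (Icc a b) :=
    isCompact_Icc.uniformContinuousOn_of_continuous hg.continuousOn
  obtain ⟨δ, hδpos, hδ⟩ := Metric.uniformContinuousOn_iff.mp huc 2 (by norm_num)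
  have hδ2 : (0:ℝ) < δ / 2 := by linarith
  have hgbδ : ∀ s t : ℝ, |s - t| ≤ δ / 2 → dist (gb s) (gb t) < 2 := by
    intro s t hst
    apply hδ _ (hclampmem s) _ (hclampmem t)
    rw [Real.dist_eq]
    calc |clamp s - clamp t| ≤ |s - t| := hclamplip s t
      _ ≤ δ / 2 := hst
      _ < δ := by linarith
  have h₀' : Circle.exp θ₀ = gb a := by
    rw [hgb]; simp only []
    rw [hclamp]; simp only []
    rw [min_eq_left hab, max_self, h₀]
  obtain ⟨n, hn⟩ := exists_nat_ge ((b - a) / (δ / 2))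
  obtain ⟨θ, hθc, hθa, hθ⟩ := lift_step gb hgbc a (δ / 2) hδ2 hgbδ θ₀ h₀' n
  refine ⟨θ, hθc, hθa, fun t ht => ?_⟩
  have hbn : b ≤ a + n * (δ / 2) := by
    rw [div_le_iff₀ hδ2] at hn
    linarith
  have h1 : max a (min t (a + n * (δ / 2))) = t := by
    rw [min_eq_left (ht.2.trans hbn), max_eq_right ht.1]
  have h2 : clamp t = t := by
    rw [hclamp]; simp only []
    rw [min_eq_left ht.2, max_eq_right ht.1]
  rw [hθ t, h1, hgb]
  simp only []
  rw [h2]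

/-! ### Rigidity of winding numbers -/

open Real in
lemma winding_eq (g₁ g₂ : ℝ → Circle) (θ₁ θ₂ : ℝ → ℝ)
    (hθ₁ : Continuous θ₁) (hθ₂ : Continuous θ₂)
    (e₁ : ∀ t ∈ Icc 0 (2*π), Circle.exp (θ₁ t) = g₁ t)
    (e₂ : ∀ t ∈ Icc 0 (2*π), Circle.exp (θ₂ t) = g₂ t)
    (hp₁ : g₁ (2*π) = g₁ 0) (hp₂ : g₂ (2*π) = g₂ 0)
    (hclose : ∀ t ∈ Icc 0 (2*π), dist (g₁ t) (g₂ t) < 2) :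
    θ₁ (2*π) - θ₁ 0 = θ₂ (2*π) - θ₂ 0 := by
  have hπ : (0:ℝ) < π := Real.pi_pos
  have h0mem : (0:ℝ) ∈ Icc 0 (2*π) := ⟨le_refl _, by linarith⟩
  have h2mem : (2*π) ∈ Icc 0 (2*π) := ⟨by linarith, le_refl _⟩
  obtain ⟨m₁, hm₁⟩ : ∃ m : ℤ, θ₁ (2*π) = θ₁ 0 + m * (2*π) := by
    apply Circle.exp_eq_exp.mp
    rw [e₁ _ h2mem, e₁ _ h0mem, hp₁]
  obtain ⟨m₂, hm₂⟩ : ∃ m : ℤ, θ₂ (2*π) = θ₂ 0 + m * (2*π) := by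
    apply Circle.exp_eq_exp.mp
    rw [e₂ _ h2mem, e₂ _ h0mem, hp₂]
  set d : ℝ → ℝ := fun t => θ₁ t - θ₂ t with hd
  have hno : ∀ t ∈ Icc 0 (2*π), ∀ m : ℤ, d t ≠ π + m * (2*π) := by
    intro t ht m heq
    have h1 : Circle.exp (θ₁ t) = Circle.exp (θ₂ t) * Circle.exp π := by
      have : θ₁ t = θ₂ t + (π + m * (2*π)) := by rw [← heq, hd]; ring
      rw [this, Circle.exp_add]
      congr 1
      exact Circle.exp_eq_exp.mpr ⟨m, by ring⟩
    have h2 : (g₁ t : ℂ) = -(g₂ t : ℂ) := by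
      have := congrArg (fun z : Circle => (z : ℂ)) h1
      simp only [Circle.coe_mul] at this
      rw [e₁ _ ht, e₂ _ ht] at this
      rw [this, Circle.coe_exp]
      push_cast
      rw [Complex.exp_pi_mul_I]
      ring
    exact circle_ne_neg_of_dist_lt (hclose t ht) h2
  have hm : m₁ = m₂ := by
    by_contra hne
    set lo : ℝ := min (d 0) (d (2*π)) with hlo
    set hi : ℝ := max (d 0) (d (2*π)) with hhi
    have hdiff : d (2*π) - d 0 = (m₁ - m₂) * (2*π) := by
      rw [hd]; simp only []; rw [hm₁, hm₂]; push_cast; ring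
    have hgap : lo + 2*π ≤ hi := by
      have h1 : (1:ℝ) ≤ |(m₁ : ℝ) - m₂| := by
        rw [← Int.cast_sub, ← Int.cast_abs]
        exact_mod_cast Int.one_le_abs (sub_ne_zero.mpr hne)
      have h2 : 2*π ≤ |d (2*π) - d 0| := by
        rw [hdiff, abs_mul, abs_of_pos (by linarith : (0:ℝ) < 2*π)]
        nlinarith
      rcases le_or_gt (d 0) (d (2*π)) with hcase | hcase
      · rw [hlo, hhi, min_eq_left hcase, max_eq_right hcase]
        have hnn : (0:ℝ) ≤ d (2*π) - d 0 := by linarith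
        rw [_root_.abs_of_nonneg hnn] at h2
        linarith
      · rw [hlo, hhi, min_eq_right hcase.le, max_eq_left hcase.le]
        have hnp : d (2*π) - d 0 ≤ 0 := by linarith
        rw [_root_.abs_of_nonpos hnp] at h2
        linarith
    set m : ℤ := ⌈(lo - π)/(2*π)⌉ with hmdef
    set x : ℝ := π + m * (2*π) with hx
    have hlox : lo ≤ x := by
      have := Int.le_ceil ((lo - π)/(2*π))
      rw [div_le_iff₀ (by linarith : (0:ℝ) < 2*π)] at this
      rw [hx]; linarith
    have hxhi : x ≤ hi := by
      have := Int.ceil_lt_add_one ((lo - π)/(2*π))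
      rw [← sub_lt_iff_lt_add] at this
      have h4 : ((m:ℝ) - 1) * (2*π) < lo - π :=
        (lt_div_iff₀ (by linarith : (0:ℝ) < 2*π)).mp (by exact_mod_cast this)
      rw [hx]
      nlinarith [h4, hgap]
    have hmem : x ∈ uIcc (d 0) (d (2*π)) := by
      rw [Set.uIcc, Set.mem_Icc]
      exact ⟨hlox, hxhi⟩
    have hsub := intermediate_value_uIcc (a := 0) (b := 2*π) (f := d)
      ((hθ₁.sub hθ₂).continuousOn)
    obtain ⟨t, ht, hdt⟩ := hsub hmem
    rw [Set.uIcc_of_le (by linarith : (0:ℝ) ≤ 2*π)] at ht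
    exact hno t ht m hdt
  rw [hm₁, hm₂, hm]
  ring

/-! ### The squaring map from the projective line to the circle -/

lemma complexOf_ne_zero {v : ℝ × ℝ} (hv : v ≠ 0) :
    ((v.1 : ℂ) + v.2 * Complex.I) ≠ 0 := by
  intro h
  apply hv
  have hre : v.1 = 0 := by
    have := congrArg Complex.re h
    simpa using this
  have him : v.2 = 0 := by
    have := congrArg Complex.im h
    simpa using this
  exact Prod.ext hre him

noncomputable def circleSq (v : {v : ℝ × ℝ // v ≠ 0}) : Circle :=
  ⟨((((v.1.1 : ℝ) : ℂ) + (v.1.2 : ℝ) * Complex.I) /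
      ((‖((v.1.1 : ℝ) : ℂ) + (v.1.2 : ℝ) * Complex.I‖ : ℝ) : ℂ))^2, by
    have hz := complexOf_ne_zero v.2
    show _ ∈ Metric.sphere (0:ℂ) 1
    rw [Metric.mem_sphere, Complex.dist_eq, sub_zero, norm_pow, norm_div, Complex.norm_real, Real.norm_eq_abs,
      abs_of_pos (norm_pos_iff.mpr hz),
      div_self (norm_ne_zero_iff.mpr hz), one_pow]⟩

lemma circleSq_coe (v : {v : ℝ × ℝ // v ≠ 0}) :
    (circleSq v : ℂ) = ((((v.1.1 : ℝ) : ℂ) + (v.1.2 : ℝ) * Complex.I) /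
      ((‖((v.1.1 : ℝ) : ℂ) + (v.1.2 : ℝ) * Complex.I‖ : ℝ) : ℂ))^2 := rfl

lemma circleSq_respects : ∀ v w : {v : ℝ × ℝ // v ≠ 0},
    (projectivizationSetoid ℝ (ℝ × ℝ)).r v w → circleSq v = circleSq w := by
  intro v w h
  have hmk : Projectivization.mk ℝ v.1 v.2 = Projectivization.mk ℝ w.1 w.2 := by
    rw [← Projectivization.mk'_eq_mk, ← Projectivization.mk'_eq_mk]
    exact Quotient.sound h
  obtain ⟨c, hc⟩ := (Projectivization.mk_eq_mk_iff ℝ _ _ v.2 w.2).mp hmk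
  have h1 : v.1.1 = (c : ℝ) * w.1.1 := by
    rw [← hc, Prod.smul_fst, Units.smul_def, smul_eq_mul]
  have h2 : v.1.2 = (c : ℝ) * w.1.2 := by
    rw [← hc, Prod.smul_snd, Units.smul_def, smul_eq_mul]
  have hcne : ((c : ℝ) : ℂ) ≠ 0 := by
    exact_mod_cast Units.ne_zero c
  have hv : (((v.1.1 : ℝ) : ℂ) + (v.1.2 : ℝ) * Complex.I)
      = ((c:ℝ):ℂ) * (((w.1.1 : ℝ) : ℂ) + (w.1.2 : ℝ) * Complex.I) := by
    rw [h1, h2]; push_cast; ring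
  have key : ((|(c : ℝ)| : ℝ) : ℂ)^2 = (((c:ℝ)) : ℂ)^2 := by
    norm_cast
    exact sq_abs _
  apply Subtype.ext
  rw [circleSq_coe, circleSq_coe, hv, norm_mul, Complex.norm_real, Real.norm_eq_abs]
  push_cast
  rw [div_pow, div_pow, mul_pow, mul_pow, key, mul_div_mul_left _ _ (pow_ne_zero 2 hcne)]

noncomputable def projCircle : Projectivization ℝ (ℝ × ℝ) → Circle :=
  Quotient.lift circleSq circleSq_respects

lemma projCircle_mk (v : ℝ × ℝ) (hv : v ≠ 0) :
    projCircle (Projectivization.mk ℝ v hv) = circleSq ⟨v, hv⟩ := rfl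

lemma continuous_projCircle : Continuous projCircle := by
  apply Continuous.quotient_lift
  apply Continuous.subtype_mk
  have hz : Continuous fun v : {v : ℝ × ℝ // v ≠ 0} =>
      (((v.1.1 : ℝ) : ℂ) + (v.1.2 : ℝ) * Complex.I) := by
    apply Continuous.add
    · exact Complex.continuous_ofReal.comp (continuous_fst.comp continuous_subtype_val)
    · exact (Complex.continuous_ofReal.comp
        (continuous_snd.comp continuous_subtype_val)).mul continuous_const
  apply Continuous.pow
  apply hz.div (Complex.continuous_ofReal.comp (continuous_norm.comp hz))
  intro v
  show ((‖((v.1.1 : ℝ) : ℂ) + (v.1.2 : ℝ) * Complex.I‖ : ℝ) : ℂ) ≠ 0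
  exact_mod_cast norm_ne_zero_iff.mpr (complexOf_ne_zero v.2)

lemma projCircle_cos_sin (φ : ℝ) :
    projCircle (Projectivization.mk ℝ (Real.cos φ, Real.sin φ) (cos_sin_ne_zero φ)) =
      Circle.exp (2 * φ) := by
  rw [projCircle_mk]
  apply Subtype.ext
  rw [circleSq_coe]
  show ((((Real.cos φ : ℝ) : ℂ) + (Real.sin φ : ℝ) * Complex.I) / _)^2 = _
  have hz : (((Real.cos φ : ℝ) : ℂ) + (Real.sin φ : ℝ) * Complex.I)
      = Complex.exp (φ * Complex.I) := by
    rw [Complex.exp_mul_I]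
    push_cast
    ring
  rw [hz, Complex.norm_exp_ofReal_mul_I, Complex.ofReal_one, div_one, Circle.coe_exp, sq,
    ← Complex.exp_add]
  congr 1
  push_cast
  ring

/-- The line subbundles `l_k` and `l_{k'}` of the trivial rank 2 bundle on the
circle, given by the Gauss maps `α ↦ [cos (kα/2) : sin (kα/2)]`, are not
homotopic for `k ≠ k'`: any continuous maps `F, F'` on `ℝ/2πℤ` induced by these
Gauss maps are non-homotopic. -/
theorem gauss_maps_not_homotopic (k k' : ℕ) (hkk' : k ≠ k')
    (F F' : AddCircle (2 * Real.pi) → Projectivization ℝ (ℝ × ℝ))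
    (hF : Continuous F) (hF' : Continuous F')
    (hFk : ∀ α : ℝ, F (α : AddCircle (2 * Real.pi)) =
      Projectivization.mk ℝ (Real.cos (k * α / 2), Real.sin (k * α / 2))
        (cos_sin_ne_zero _))
    (hFk' : ∀ α : ℝ, F' (α : AddCircle (2 * Real.pi)) =
      Projectivization.mk ℝ (Real.cos (k' * α / 2), Real.sin (k' * α / 2))
        (cos_sin_ne_zero _)) :
    ¬ ContinuousMap.Homotopic ⟨F, hF⟩ ⟨F', hF'⟩ := by
  set π : ℝ := Real.pi with hπdef
  have hπ : (0:ℝ) < π := Real.pi_pos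
  rintro ⟨H⟩
  set G : ℝ → ℝ → Circle := fun t α =>
    projCircle (H (Set.projIcc (0:ℝ) 1 zero_le_one t, (α : AddCircle (2 * π)))) with hGdef
  have hGcont : Continuous (fun q : ℝ × ℝ => G q.1 q.2) := by
    apply continuous_projCircle.comp
    apply H.continuous.comp
    exact ((continuous_projIcc.comp continuous_fst).prodMk
      ((AddCircle.continuous_mk' (2 * π)).comp continuous_snd))
  have hGt : ∀ t, Continuous (G t) := fun t =>
    hGcont.comp (continuous_const.prodMk continuous_id)
  have hG0 : ∀ α : ℝ, G 0 α = Circle.exp (k * α) := by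
    intro α
    have hproj : Set.projIcc (0:ℝ) 1 zero_le_one 0 = 0 := by
      apply Subtype.ext
      simp [Set.projIcc]
    rw [hGdef]
    simp only []
    rw [hproj, H.apply_zero, ContinuousMap.coe_mk, hFk α, projCircle_cos_sin]
    congr 1
    ring
  have hG1 : ∀ α : ℝ, G 1 α = Circle.exp (k' * α) := by
    intro α
    have hproj : Set.projIcc (0:ℝ) 1 zero_le_one 1 = 1 := by
      apply Subtype.ext
      simp [Set.projIcc]
    rw [hGdef]
    simp only []
    rw [hproj, H.apply_one, ContinuousMap.coe_mk, hFk' α, projCircle_cos_sin]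
    congr 1
    ring
  have hGper : ∀ t α, G t (α + 2*π) = G t α := by
    intro t α
    rw [hGdef]
    simp only []
    rw [AddCircle.coe_add_period]
  have lifts : ∀ t : ℝ, ∃ θ : ℝ → ℝ, Continuous θ ∧
      ∀ s ∈ Icc 0 (2*π), Circle.exp (θ s) = G t s := by
    intro t
    obtain ⟨θ, hθc, _, hθ⟩ := exists_lift (G t) (hGt t) 0 (2*π)
      (Complex.arg ((G t 0 : ℂ))) (Circle.exp_arg _)
    exact ⟨θ, hθc, hθ⟩
  choose θf hθfc hθf using lifts
  set W : ℝ → ℝ := fun t => θf t (2*π) - θf t 0 with hW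
  have hper : ∀ t, G t (2*π) = G t 0 := by
    intro t
    have := hGper t 0
    rw [zero_add] at this
    exact this
  have hWlc : IsLocallyConstant W := by
    rw [IsLocallyConstant.iff_exists_open]
    intro t₀
    set U : Set (ℝ × ℝ) := {q | dist (G q.1 q.2) (G t₀ q.2) < 2} with hU
    have hUopen : IsOpen U := by
      apply isOpen_lt _ continuous_const
      exact (hGcont.dist ((hGt t₀).comp continuous_snd))
    have hsub : {t₀} ×ˢ Icc 0 (2*π) ⊆ U := by
      rintro ⟨t, s⟩ ⟨ht, _⟩
      simp only [Set.mem_singleton_iff] at ht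
      subst ht
      simp [hU]
    obtain ⟨u, v, hu, _, ht₀u, hIccv, huv⟩ :=
      generalized_tube_lemma isCompact_singleton isCompact_Icc hUopen hsub
    refine ⟨u, hu, ht₀u rfl, fun t htu => ?_⟩
    rw [hW]
    simp only []
    apply winding_eq (G t) (G t₀) _ _ (hθfc t) (hθfc t₀) (hθf t) (hθf t₀)
      (hper t) (hper t₀)
    intro s hs
    have : (t, s) ∈ U := huv ⟨htu, hIccv hs⟩
    exact this
  have hW01 : W 0 = W 1 := hWlc.apply_eq_of_preconnectedSpace 0 1
  have hWval : ∀ (j : ℕ) (t : ℝ), (∀ α : ℝ, G t α = Circle.exp (j * α)) →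
      W t = j * (2*π) := by
    intro j t hval
    have := winding_eq (G t) (G t) (θf t) (fun s => j * s) (hθfc t)
      (continuous_const.mul continuous_id) (hθf t)
      (fun s _ => (hval s).symm) (hper t) (hper t)
      (fun s _ => by simp)
    rw [hW]
    simp only []
    rw [this]
    show (j:ℝ) * (2*Real.pi) - (j:ℝ) * 0 = (j:ℝ) * (2*π)
    rw [hπdef]
    ring
  have h0 : W 0 = k * (2*π) := hWval k 0 hG0
  have h1 : W 1 = k' * (2*π) := hWval k' 1 hG1
  rw [h0, h1] at hW01
  have : (k : ℝ) = k' := by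
    have h2π : (0:ℝ) < 2*π := by linarith
    exact mul_right_cancel₀ (ne_of_gt h2π) hW01
  exact hkk' (by exact_mod_cast this)
end
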